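/- arXiv:1303.4878 — 6 statements merged into one kernel-verified Lean document; each statement's English description precedes it below -/
import Mathlib

section
/- Let $a \geq 1$ be an integer. The amalgamated sum (pushout) of monoids $P = \mathbb{N}^2 \oplus_{\mathbb{N}} \mathbb{N}$, formed from the diagonal map $\Delta: \mathbb{N} \to \mathbb{N}^2$, $n \mapsto (n,n)$, and the multiplication-by-$a$ map $\mathbb{N} \to \mathbb{N}$, is isomorphic to the submonoid $\frac{1}{a}\Delta(\mathbb{N}) + \mathbb{N}^2$ of $\mathbb{Q}^2$ consisting of pairs of the form $(\frac{n}{a} + \alpha, \frac{n}{a} + \beta)$ with $n, \alpha, \beta \in \mathbb{N}$. -/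
/-- The submonoid `(1/a)Δ(ℕ) + ℕ²` of `ℚ²`, consisting of the pairs
`(n/a + α, n/a + β)` with `n, α, β ∈ ℕ`. -/
def Pmon (a : ℕ) : AddSubmonoid (ℚ × ℚ) where
  carrier := {x | ∃ n α β : ℕ, x = ((n : ℚ) / a + α, (n : ℚ) / a + β)}
  zero_mem' := ⟨0, 0, 0, by ext <;> simp⟩
  add_mem' := by
    rintro x y ⟨n, α, β, rfl⟩ ⟨n', α', β', rfl⟩
    refine ⟨n + n', α + α', β + β', ?_⟩
    simp only [Prod.mk_add_mk, Prod.mk.injEq]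
    constructor <;> · push_cast; ring

/-- The map `ℕ² → (1/a)Δ(ℕ) + ℕ²`, `(α, β) ↦ (α, β)`. -/
def ιP (a : ℕ) (x : ℕ × ℕ) : Pmon a :=
  ⟨((x.1 : ℚ), (x.2 : ℚ)), ⟨0, x.1, x.2, by norm_num⟩⟩

/-- The map `h : ℕ → (1/a)Δ(ℕ) + ℕ²`, `n ↦ (n/a, n/a)`. -/
def hP (a : ℕ) (n : ℕ) : Pmon a :=
  ⟨((n : ℚ) / a, (n : ℚ) / a), ⟨n, 0, 0, by norm_num⟩⟩

section Aux

variable {a : ℕ} (ha : 1 ≤ a) {M : Type*} [AddCommMonoid M] (f : ℕ × ℕ →+ M) (g : ℕ →+ M)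
  (hfg : ∀ n : ℕ, f (n, n) = g (a * n))

include ha hfg in
lemma welldef_half {n α β n' α' β' : ℕ} (hle : n' ≤ n)
    (h1 : n + a * α = n' + a * α') (h2 : n + a * β = n' + a * β') :
    g n + f (α, β) = g n' + f (α', β') := by
  have ha0 : 0 < a := ha
  have hαle : α ≤ α' := Nat.le_of_mul_le_mul_left (by omega) ha0
  set k := α' - α with hk
  have hα' : α' = α + k := by omega
  have hmul : a * α' = a * α + a * k := by rw [hα', Nat.mul_add]
  have hn : n = n' + a * k := by omega
  have hβ' : β' = β + k :=
    Nat.eq_of_mul_eq_mul_left ha0 (by rw [Nat.mul_add]; omega)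
  have hgn : g n = g n' + f (k, k) := by
    rw [hn, map_add, hfg]
  have hf : f (α', β') = f (α, β) + f (k, k) := by
    rw [hα', hβ', ← map_add]
    rfl
  rw [hgn, hf]
  abel

include ha hfg in
lemma welldef {n α β n' α' β' : ℕ}
    (h : (((n : ℚ) / a + α, (n : ℚ) / a + β) : ℚ × ℚ)
        = ((n' : ℚ) / a + α', (n' : ℚ) / a + β')) :
    g n + f (α, β) = g n' + f (α', β') := by
  have ha0 : (0 : ℚ) < a := by exact_mod_cast ha
  obtain ⟨h1, h2⟩ := Prod.mk.injEq .. ▸ h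
  have e1 : n + a * α = n' + a * α' := by
    have : ((n : ℚ) + a * α) = n' + a * α' := by
      field_simp at h1
      linarith
    exact_mod_cast this
  have e2 : n + a * β = n' + a * β' := by
    have : ((n : ℚ) + a * β) = n' + a * β' := by
      field_simp at h2
      linarith
    exact_mod_cast this
  rcases le_total n' n with hle | hle
  · exact welldef_half ha f g hfg hle e1 e2
  · exact (welldef_half ha f g hfg hle e1.symm e2.symm).symm

noncomputable def phiFun (x : Pmon a) : M :=
  g x.2.choose + f (x.2.choose_spec.choose, x.2.choose_spec.choose_spec.choose)

include ha hfg in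
lemma phiFun_eq {n α β : ℕ} {x : Pmon a}
    (hx : (x : ℚ × ℚ) = ((n : ℚ) / a + α, (n : ℚ) / a + β)) :
    phiFun f g x = g n + f (α, β) := by
  apply welldef ha f g hfg
  rw [← x.2.choose_spec.choose_spec.choose_spec, hx]

end Aux

/-- **The amalgamated sum description.**  For `a ≥ 1`, the monoid
`P = (1/a)Δ(ℕ) + ℕ² ⊆ ℚ²`, together with the maps `ℕ² → P` and `h : ℕ → P`,
satisfies the universal property of the pushout `ℕ² ⊕_ℕ ℕ` of the diagonal
`Δ : ℕ → ℕ²` and multiplication by `a` on `ℕ`, in the category of commutative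
(additive) monoids; hence the pushout is isomorphic to `P`. -/
theorem stmt0 (a : ℕ) (ha : 1 ≤ a)
    (M : Type*) [AddCommMonoid M] (f : ℕ × ℕ →+ M) (g : ℕ →+ M)
    (hfg : ∀ n : ℕ, f (n, n) = g (a * n)) :
    ∃! φ : Pmon a →+ M, (∀ x : ℕ × ℕ, φ (ιP a x) = f x) ∧ ∀ n : ℕ, φ (hP a n) = g n := by
  refine ⟨⟨⟨phiFun f g, ?_⟩, ?_⟩, ⟨?_, ?_⟩, ?_⟩
  · rw [phiFun_eq ha f g hfg (n := 0) (α := 0) (β := 0) (by ext <;> simp)]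
    simp [show ((0, 0) : ℕ × ℕ) = 0 from rfl]
  · rintro ⟨x, hxm⟩ ⟨y, hym⟩
    obtain ⟨n, α, β, hx⟩ := hxm
    obtain ⟨n', α', β', hy⟩ := hym
    show phiFun f g _ = phiFun f g _ + phiFun f g _
    rw [phiFun_eq ha f g hfg (n := n + n') (α := α + α') (β := β + β')
        (by show x + y = _
            simp only [hx, hy, Prod.mk_add_mk, Prod.mk.injEq]
            constructor <;> · push_cast; ring),
      phiFun_eq ha f g hfg (n := n) (α := α) (β := β) hx,
      phiFun_eq ha f g hfg (n := n') (α := α') (β := β') hy]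
    rw [show ((α + α', β + β') : ℕ × ℕ) = (α, β) + (α', β') from rfl]
    simp only [map_add]
    abel
  · intro x
    show phiFun f g _ = _
    rw [phiFun_eq ha f g hfg (n := 0) (α := x.1) (β := x.2) (by norm_num [ιP])]
    simp
  · intro n
    show phiFun f g _ = _
    rw [phiFun_eq ha f g hfg (n := n) (α := 0) (β := 0) (by norm_num [hP])]
    simp [show ((0, 0) : ℕ × ℕ) = 0 from rfl]
  · rintro φ ⟨hφι, hφh⟩
    ext x
    obtain ⟨x, n, α, β, hx⟩ := x
    have hrep : (⟨x, n, α, β, hx⟩ : Pmon a) = hP a n + ιP a (α, β) := by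
      apply Subtype.ext
      simp [hx, hP, ιP]
    show φ _ = phiFun f g _
    rw [phiFun_eq ha f g hfg (n := n) (α := α) (β := β) hx, hrep, map_add, hφι, hφh]
end

section
/- Let $a \geq 1$ be an integer and let $P = \frac{1}{a}\Delta(\mathbb{N}) + \mathbb{N}^2 \subseteq \mathbb{Q}^2$ be the submonoid of pairs $(\frac{n}{a}+\alpha, \frac{n}{a}+\beta)$ with $n,\alpha,\beta \in \mathbb{N}$. Then the map $h: \mathbb{N} \to P$ given by $n \mapsto (\frac{n}{a}, \frac{n}{a})$ is injective and the quotient group $P^{\mathrm{gp}}/h(\mathbb{N})^{\mathrm{gp}}$ is torsion-free. -/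
/-- The map `h : ℕ → (1/a)Δ(ℕ) + ℕ² ⊆ ℚ²`, `n ↦ (n/a, n/a)`. -/
def hmap (a : ℕ) (n : ℕ) : ℚ × ℚ := ((n : ℚ) / a, (n : ℚ) / a)

/-- The subgroup of `(x,y) ∈ ℚ²` with `a*x ∈ ℤ` and `x - y ∈ ℤ`. -/
def Sgrp (a : ℕ) : AddSubgroup (ℚ × ℚ) where
  carrier := {x | (∃ k : ℤ, (a : ℚ) * x.1 = k) ∧ (∃ l : ℤ, x.1 - x.2 = l)}
  zero_mem' := ⟨⟨0, by simp⟩, ⟨0, by simp⟩⟩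
  add_mem' := by
    rintro x y ⟨⟨k, hk⟩, ⟨l, hl⟩⟩ ⟨⟨k', hk'⟩, ⟨l', hl'⟩⟩
    exact ⟨⟨k + k', by simp only [Prod.fst_add]; push_cast; linarith⟩,
      ⟨l + l', by simp only [Prod.fst_add, Prod.snd_add]; push_cast; linarith⟩⟩
  neg_mem' := by
    rintro x ⟨⟨k, hk⟩, ⟨l, hl⟩⟩
    exact ⟨⟨-k, by simp only [Prod.fst_neg]; push_cast; linarith⟩,
      ⟨-l, by simp only [Prod.fst_neg, Prod.snd_neg]; push_cast; linarith⟩⟩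

/-- For `a ≥ 1`, the map `h : ℕ → P = (1/a)Δ(ℕ) + ℕ²`, `n ↦ (n/a, n/a)` is injective,
and the quotient `P^gp / h(ℕ)^gp` is torsion-free: here `P^gp` is the subgroup of `ℚ²`
generated by `P` (its Grothendieck group) and `h(ℕ)^gp = ℤ·(1/a, 1/a)`; torsion-freeness
of the quotient says that any element of `P^gp` with a positive multiple in `h(ℕ)^gp`
already lies in `h(ℕ)^gp`. -/
theorem stmt1 (a : ℕ) (ha : 1 ≤ a) :
    Function.Injective (hmap a) ∧
    ∀ x : ℚ × ℚ, x ∈ AddSubgroup.closure (Pmon a : Set (ℚ × ℚ)) →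
      ∀ m : ℕ, 0 < m →
        m • x ∈ AddSubgroup.zmultiples ((1 / (a : ℚ), 1 / (a : ℚ)) : ℚ × ℚ) →
        x ∈ AddSubgroup.zmultiples ((1 / (a : ℚ), 1 / (a : ℚ)) : ℚ × ℚ) := by
  have ha' : (a : ℚ) ≠ 0 := by positivity
  constructor
  · intro n n' h
    have := congrArg Prod.fst h
    simp only [hmap] at this
    have : (n : ℚ) = n' := by
      field_simp at this; exact_mod_cast this
    exact_mod_cast this
  · intro x hx m hm hmx
    have hxS : x ∈ Sgrp a := by
      refine AddSubgroup.closure_le (Sgrp a) |>.mpr ?_ hx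
      rintro y ⟨n, α, β, rfl⟩
      refine ⟨⟨n + a * α, by push_cast; field_simp⟩, ⟨(α : ℤ) - β, by push_cast; ring⟩⟩
    obtain ⟨⟨k, hk⟩, ⟨l, hl⟩⟩ := hxS
    obtain ⟨j, hj⟩ := hmx
    have h1 : (j : ℚ) * (1 / a) = m * x.1 := by
      have := congrArg Prod.fst hj; simpa [Prod.smul_def, zsmul_eq_mul] using this
    have h2 : (j : ℚ) * (1 / a) = m * x.2 := by
      have := congrArg Prod.snd hj; simpa [Prod.smul_def, zsmul_eq_mul] using this
    have hm' : (m : ℚ) ≠ 0 := by positivity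
    have hx12 : x.1 = x.2 := by
      have : (m : ℚ) * x.1 = m * x.2 := h1 ▸ h2
      exact mul_left_cancel₀ hm' this
    refine ⟨k, ?_⟩
    have hx1 : x.1 = k / a := by rw [← hk]; field_simp
    have : (k : ℚ) • ((1 / a : ℚ), (1 / a : ℚ)) = x := by
      rw [Prod.smul_def]
      ext <;> simp [smul_eq_mul, hx1, ← hx12] <;> ring
    simpa using this
end

section
/- Let $A \to B$ be a finite étale ring homomorphism of commutative rings (finite projective and separable as an $A$-algebra), and let $g: B \to A$ be an $A$-algebra section of it. Then there exists an idempotent $e \in B$ and an $A$-algebra $C$ together with an isomorphism of $A$-algebras $B \cong A \times C$ under which $g$ corresponds to the first projection. Moreover $e$ is the unique element with $g(x) = \mathrm{Tr}_{B/A}(ex)$ for all $x \in B$. -/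
universe u

/-- The data of a splitting `B ≅ A × C` of an `A`-algebra `B`, under which a given
`A`-algebra section `g : B → A` corresponds to the first projection. -/
structure SplittingData (A B : Type u) [CommRing A] [CommRing B] [Algebra A B]
    (g : B →ₐ[A] A) where
  C : Type u
  [commRingC : CommRing C]
  [algebraC : Algebra A C]
  iso : B ≃ₐ[A] A × C
  fst_eq : ∀ x : B, (iso x).1 = g x

/-- **Splitting off a section of a finite étale map.**  Let `A → B` be finite étale
(finite projective with perfect trace pairing) and let `g : B → A` be an `A`-algebra
section.  Then there is an idempotent `e ∈ B` and an `A`-algebra `C` with an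
`A`-algebra isomorphism `B ≅ A × C` under which `g` is the first projection; moreover
`e` is the unique element with `g x = Tr_{B/A}(e x)` for all `x ∈ B`. -/
theorem stmt3 (A B : Type u) [CommRing A] [CommRing B] [Algebra A B]
    [Module.Finite A B] [Module.Projective A B]
    (hperfect : Function.Bijective ⇑(Algebra.traceForm A B))
    (g : B →ₐ[A] A) :
    ∃ e : B, IsIdempotentElem e ∧
      (∀ x : B, g x = Algebra.trace A B (e * x)) ∧
      (∀ e' : B, (∀ x : B, g x = Algebra.trace A B (e' * x)) → e' = e) ∧
      Nonempty (SplittingData A B g) := by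
  -- First dispose of the degenerate case where `A` (hence `B`) is trivial.
  rcases subsingleton_or_nontrivial A with hA | hA
  · have hB : Subsingleton B := Module.subsingleton A B
    refine ⟨0, ?_, ?_, ?_, ?_⟩
    · simp [IsIdempotentElem]
    · intro x; exact Subsingleton.elim _ _
    · intro e' _; exact Subsingleton.elim _ _
    · refine ⟨⟨B, AlgEquiv.ofBijective (g.prod (AlgHom.id A B)) ⟨?_, ?_⟩, ?_⟩⟩
      · intro x y _; exact Subsingleton.elim _ _
      · intro p; exact ⟨0, Subsingleton.elim _ _⟩
      · intro x; exact Subsingleton.elim _ _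
  -- `B` is free: otherwise the trace form is zero, forcing `B` (hence `A`) trivial.
  have hfree : Module.Free A B := by
    by_contra hnot
    have hno : ¬∃ s : Finset B, Nonempty (Module.Basis s A B) := by
      rintro ⟨s, ⟨b⟩⟩; exact hnot (Module.Free.of_basis b)
    have htr0 : Algebra.trace A B = 0 := Algebra.trace_eq_zero_of_not_exists_basis A hno
    have hBs : Subsingleton B := by
      constructor
      intro x y
      apply hperfect.injective
      apply LinearMap.ext; intro z
      simp [Algebra.traceForm_apply, htr0]
    have : Subsingleton A := by
      constructor
      intro a b
      have h1 : g (algebraMap A B a) = g (algebraMap A B b) := by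
        congr 1; exact Subsingleton.elim _ _
      simpa [g.commutes] using h1
    exact (not_subsingleton_iff_nontrivial.mpr hA) this
  -- The element `e` representing `g` via the trace form.
  obtain ⟨e, he⟩ := hperfect.surjective g.toLinearMap
  have htr : ∀ x : B, Algebra.trace A B (e * x) = g x := by
    intro x
    have := congrArg (fun f => f x) he
    simpa [Algebra.traceForm_apply] using this
  -- The key multiplicative identity `e * x = g x • e`.
  have key : ∀ x : B, e * x = g x • e := by
    intro x
    apply hperfect.injective
    apply LinearMap.ext; intro y
    rw [Algebra.traceForm_apply, Algebra.traceForm_apply, mul_assoc, htr (x * y),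
      smul_mul_assoc, map_smul, smul_eq_mul, htr y, map_mul]
  -- `trace e = 1`.
  have h1 : Algebra.trace A B e = 1 := by
    have := htr 1; rw [mul_one] at this; rw [this, map_one]
  -- `g e = 1`, via the rank-one computation of the trace.
  have hge : g e = 1 := by
    have hcomp : (LinearMap.toSpanSingleton A B e) ∘ₗ g.toLinearMap
        = (Algebra.lmul A B e : B →ₗ[A] B) := by
      apply LinearMap.ext; intro x
      simp [LinearMap.toSpanSingleton_apply, (key x).symm]
    have h2 : LinearMap.trace A B ((LinearMap.toSpanSingleton A B e) ∘ₗ g.toLinearMap)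
        = LinearMap.trace A A (g.toLinearMap ∘ₗ LinearMap.toSpanSingleton A B e) :=
      LinearMap.trace_comp_comm' _ _
    have h3 : g.toLinearMap ∘ₗ LinearMap.toSpanSingleton A B e
        = g e • LinearMap.id := by
      apply LinearMap.ext; intro a
      simp [LinearMap.toSpanSingleton_apply, mul_comm, smul_eq_mul]
    have h4 : LinearMap.trace A A (g.toLinearMap ∘ₗ LinearMap.toSpanSingleton A B e)
        = g e := by
      rw [h3, map_smul, LinearMap.trace_id, Module.finrank_self]
      simp
    have h5 : Algebra.trace A B e
        = LinearMap.trace A B ((LinearMap.toSpanSingleton A B e) ∘ₗ g.toLinearMap) := by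
      rw [hcomp]; rfl
    rw [← h4, ← h2, ← h5, h1]
  -- `e` is idempotent.
  have hidem : IsIdempotentElem e := by
    unfold IsIdempotentElem
    rw [key e, hge, one_smul]
  refine ⟨e, hidem, fun x => (htr x).symm, ?_, ?_⟩
  · -- uniqueness
    intro e' he'
    apply hperfect.injective
    apply LinearMap.ext; intro y
    rw [Algebra.traceForm_apply, Algebra.traceForm_apply, htr y, ← he' y]
  · -- the splitting
    set I : Ideal B := Ideal.span {e} with hI
    refine ⟨⟨B ⧸ I, AlgEquiv.ofBijective (g.prod (Ideal.Quotient.mkₐ A I)) ⟨?_, ?_⟩, ?_⟩⟩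
    · -- injective
      intro x y hxy
      have h1 : g x = g y := congrArg Prod.fst hxy
      have h2 : x - y ∈ I := by
        rw [← Ideal.Quotient.eq]
        exact congrArg Prod.snd hxy
      obtain ⟨z, hz⟩ := Ideal.mem_span_singleton'.mp h2
      have h3 : e * (x - y) = 0 := by
        rw [key (x - y), map_sub, h1, sub_self, zero_smul]
      have h4 : x - y = 0 := by
        calc x - y = z * e := hz.symm
          _ = z * (e * e) := by rw [hidem]
          _ = e * (z * e) := by ring
          _ = e * (x - y) := by rw [hz]
          _ = 0 := h3
      exact sub_eq_zero.mp h4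
    · -- surjective
      rintro ⟨a, c⟩
      obtain ⟨b, rfl⟩ := Ideal.Quotient.mk_surjective c
      refine ⟨algebraMap A B a * e + b - e * b, Prod.ext ?_ ?_⟩
      · simp [map_mul, hge, g.commutes]
      · show Ideal.Quotient.mk I _ = Ideal.Quotient.mk I b
        rw [Ideal.Quotient.eq]
        refine Ideal.mem_span_singleton'.mpr ⟨algebraMap A B a - b, ?_⟩
        ring
    · intro x; rfl
end

section
/- Let $A$ be a normal integral domain with fraction field inverting an element $s \in A$, and let $B$ be a normal $A$-algebra which is finite over $A$ such that $A[1/s] \to B[1/s]$ is finite étale and admits an $A[1/s]$-algebra section. Then the idempotent $e \in B[1/s]$ determined by the section actually lies in $B$, and $B \cong B' \times C$ with $A \subseteq B' \subseteq A[1/s]$, $B'$ finite over $A$; since $A$ is normal, $B' = A$. -/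
universe u

/-- **Idempotents descend to the normal model.**  Let `A` be a normal (integrally
closed) domain, `s ∈ A` nonzero, and `B` a finite `A`-algebra, normal in the sense
that it is integrally closed in `Bs = B[1/s]`, with the image of `s` in `B` not a
zero divisor.  Assume `As = A[1/s] → Bs = B[1/s]` is finite étale (finite projective
with perfect trace pairing) and admits an `As`-algebra section `g`.  Then the
idempotent `e ∈ B[1/s]` determined by `g` (via `g x = Tr(e·x)`) lies in `B`, and
`B ≅ A × C` as `A`-algebras, compatibly with `g` (the factor `B'` with
`A ⊆ B' ⊆ A[1/s]` being equal to `A` by normality of `A`). -/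
theorem stmt4 (A : Type u) [CommRing A] [IsDomain A] [IsIntegrallyClosed A]
    (B : Type u) [CommRing B] [Algebra A B] [Module.Finite A B]
    (s : A) (hs : s ≠ 0)
    (hreg : ∀ x : B, algebraMap A B s * x = 0 → x = 0)
    (As Bs : Type u) [CommRing As] [CommRing Bs]
    [Algebra A As] [IsLocalization.Away s As]
    [Algebra B Bs] [IsLocalization.Away (algebraMap A B s) Bs]
    [Algebra A Bs] [Algebra As Bs] [IsScalarTower A As Bs] [IsScalarTower A B Bs]
    [Module.Finite As Bs] [Module.Projective As Bs]
    (hperfect : Function.Bijective ⇑(Algebra.traceForm As Bs))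
    (hnormalB : ∀ x : Bs, IsIntegral B x → x ∈ (algebraMap B Bs).range)
    (g : Bs →ₐ[As] As) :
    ∃ e : B, IsIdempotentElem e ∧
      (∀ x : Bs, g x = Algebra.trace As Bs (algebraMap B Bs e * x)) ∧
      ∃ (C : Type u) (_ : CommRing C) (_ : Algebra A C),
        ∃ iso : B ≃ₐ[A] A × C,
          ∀ x : B, g (algebraMap B Bs x) = algebraMap A As ((iso x).1) := by
  classical
  -- basic injectivity facts
  have hinjA : Function.Injective (algebraMap A As) :=
    IsLocalization.injective As (powers_le_nonZeroDivisors_of_noZeroDivisors hs)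
  have hntAs : Nontrivial As :=
    ⟨algebraMap A As 0, algebraMap A As 1, fun h => zero_ne_one (hinjA h)⟩
  have hsB : Submonoid.powers (algebraMap A B s) ≤ nonZeroDivisors B := by
    rw [Submonoid.powers_le]
    refine ⟨fun x hx => hreg x hx, ?_⟩
    intro x hx
    exact hreg x (by rw [mul_comm]; exact hx)
  have hinjB : Function.Injective (algebraMap B Bs) := IsLocalization.injective Bs hsB
  -- the element e of Bs
  set T : Bs ≃ₗ[As] (Bs →ₗ[As] As) :=
    LinearEquiv.ofBijective (Algebra.traceForm As Bs) hperfect with hT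
  set e : Bs := T.symm g.toLinearMap with he
  have hTe : Algebra.traceForm As Bs e = g.toLinearMap := T.apply_symm_apply g.toLinearMap
  have htr : ∀ x : Bs, Algebra.trace As Bs (e * x) = g x := by
    intro x
    have := congrArg (fun φ => φ x) hTe
    simpa [Algebra.traceForm_apply] using this
  have hinj : Function.Injective ⇑(Algebra.traceForm As Bs) := hperfect.1
  -- e kills the kernel of g
  have hker : ∀ x : Bs, g x = 0 → e * x = 0 := by
    intro x hx
    apply hinj
    rw [map_zero]
    ext z
    simp only [Algebra.traceForm_apply, LinearMap.zero_apply]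
    rw [mul_assoc, htr, map_mul, hx, zero_mul]
  -- e * x = g x • e
  have hmul : ∀ x : Bs, e * x = g x • e := by
    intro x
    have h0 : g (x - algebraMap As Bs (g x)) = 0 := by
      rw [map_sub, AlgHom.commutes, Algebra.algebraMap_self, RingHom.id_apply, sub_self]
    have := hker _ h0
    rw [mul_sub, sub_eq_zero] at this
    rw [this, Algebra.smul_def, mul_comm]
  have htre : Algebra.trace As Bs e = 1 := by
    have := htr 1
    rwa [mul_one, map_one] at this
  -- Bs is free over As (otherwise mathlib's trace is identically zero)
  have hfree : ∃ t : Finset Bs, Nonempty (Module.Basis t As Bs) := by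
    by_contra H
    have h0 : LinearMap.trace As Bs = 0 := by
      rw [LinearMap.trace, dif_neg H]
    have : Algebra.trace As Bs e = 0 := by
      rw [Algebra.trace_apply, h0, LinearMap.zero_apply]
    rw [htre] at this
    exact one_ne_zero this
  obtain ⟨t, ⟨b⟩⟩ := hfree
  -- g e = 1
  have hge : g e = 1 := by
    have hlm : ((Algebra.lmul As Bs) e : Bs →ₗ[As] Bs)
        = dualTensorHom As Bs Bs (g.toLinearMap ⊗ₜ[As] e) := by
      ext z
      rw [dualTensorHom_apply, AlgHom.toLinearMap_apply]
      exact hmul z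
    have : Algebra.trace As Bs e = g e := by
      rw [Algebra.trace_apply, hlm, ← LinearMap.comp_apply,
        LinearMap.trace_eq_contract_of_basis b, contractLeft_apply,
        AlgHom.toLinearMap_apply]
    rw [← this, htre]
  -- e is idempotent
  have hide : e * e = e := by
    rw [hmul e, hge, one_smul]
  -- e is integral over B, hence lies in B
  have hint : IsIntegral B e := by
    refine ⟨Polynomial.X * (Polynomial.X - Polynomial.C 1),
      (Polynomial.monic_X).mul (Polynomial.monic_X_sub_C 1), ?_⟩
    simp only [Polynomial.eval₂_mul, Polynomial.eval₂_sub, Polynomial.eval₂_X,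
      Polynomial.eval₂_one, Polynomial.eval₂_C, map_one]
    rw [mul_sub, mul_one, hide, sub_self]
  obtain ⟨eB, heB⟩ := hnormalB e hint
  have heBidem : IsIdempotentElem eB := by
    apply hinjB
    rw [map_mul, heB, hide]
  refine ⟨eB, heBidem, ?_, ?_⟩
  · intro x
    rw [heB, htr]
  -- the splitting
  · set K := FractionRing A with hK
    have hsK : IsUnit (algebraMap A K s) :=
      IsLocalization.map_units K ⟨s, mem_nonZeroDivisors_of_ne_zero hs⟩
    set j : As →+* K := IsLocalization.Away.lift (S := As) s hsK with hj
    have hjalg : ∀ a : A, j (algebraMap A As a) = algebraMap A K a := fun a =>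
      IsLocalization.Away.lift_eq s hsK a
    have hKinj : Function.Injective (algebraMap A K) := IsFractionRing.injective A K
    have hjinj : Function.Injective j := by
      rw [injective_iff_map_eq_zero]
      intro z hz
      obtain ⟨⟨a, m⟩, hm⟩ := IsLocalization.surj (Submonoid.powers s) z
      have : algebraMap A K a = 0 := by
        rw [← hjalg a, ← hm, map_mul, hz, zero_mul]
      have ha : a = 0 := by
        apply hKinj; rw [this, map_zero]
      have hu : IsUnit (algebraMap A As (m : A)) :=
        IsLocalization.map_units As m
      have : z * algebraMap A As (m : A) = 0 := by
        rw [hm, ha, map_zero]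
      exact (hu.mul_left_eq_zero).mp this
    -- the composite B → Bs → As → K is an A-algebra hom with values integral over A
    have hGcomm : ∀ a : A, j (g (algebraMap B Bs (algebraMap A B a))) = algebraMap A K a := by
      intro a
      rw [← IsScalarTower.algebraMap_apply A B Bs,
        IsScalarTower.algebraMap_apply A As Bs, AlgHom.commutes,
        Algebra.algebraMap_self, RingHom.id_apply, hjalg]
    set GA : B →ₐ[A] K :=
      { toRingHom := j.comp ((g : Bs →+* As).comp (algebraMap B Bs)),
        commutes' := hGcomm } with hGA
    have hGAapply : ∀ x : B, GA x = j (g (algebraMap B Bs x)) := fun _ => rfl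
    have hrange : ∀ x : B, ∃ a : A, algebraMap A K a = GA x := by
      intro x
      exact IsIntegrallyClosed.isIntegral_iff.mp ((IsIntegral.of_finite A x).map GA)
    choose f hf using hrange
    let fA : B →ₐ[A] A :=
      { toFun := f
        map_one' := hKinj (by rw [hf, map_one, map_one])
        map_mul' := fun x y => hKinj (by rw [hf, map_mul, map_mul, hf, hf])
        map_zero' := hKinj (by rw [hf, map_zero, map_zero])
        map_add' := fun x y => hKinj (by rw [hf, map_add, map_add, hf, hf])
        commutes' := fun a => hKinj (by rw [hf, hGAapply, hGcomm, Algebra.algebraMap_self, RingHom.id_apply]) }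
    have hfAapply : ∀ x : B, fA x = f x := fun _ => rfl
    -- the key compatibility
    have hfinal : ∀ x : B, g (algebraMap B Bs x) = algebraMap A As (f x) := by
      intro x
      apply hjinj
      rw [hjalg, ← hGAapply, ← hf]
    -- the ideal generated by eB and the quotient algebra
    set I : Ideal B := Ideal.span {eB} with hI
    set ψ : B →ₐ[A] A × (B ⧸ I) := fA.prod (Ideal.Quotient.mkₐ A I) with hψ
    have hψinj : Function.Injective ψ := by
      rw [injective_iff_map_eq_zero]
      intro x hx
      have hx1 : fA x = 0 := congrArg Prod.fst hx
      have hx2 : Ideal.Quotient.mkₐ A I x = 0 := congrArg Prod.snd hx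
      have hxI : x ∈ I := by
        rwa [Ideal.Quotient.mkₐ_eq_mk, Ideal.Quotient.eq_zero_iff_mem] at hx2
      obtain ⟨c, hc⟩ := Ideal.mem_span_singleton.mp hxI
      have hx1' : f x = 0 := by rw [← hfAapply]; exact hx1
      have hgx : g (algebraMap B Bs x) = 0 := by
        rw [hfinal x, hx1', map_zero]
      have h1 : e * algebraMap B Bs x = 0 := by
        rw [hmul, hgx, zero_smul]
      have h2 : e * algebraMap B Bs x = algebraMap B Bs x := by
        conv_rhs => rw [hc]
        rw [hc, map_mul, heB, ← mul_assoc, hide]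
      apply hinjB
      rw [map_zero, ← h2, h1]
    have hψsurj : Function.Surjective ψ := by
      rintro ⟨a, c⟩
      obtain ⟨x, rfl⟩ := Ideal.Quotient.mk_surjective c
      refine ⟨algebraMap A B a * eB + x * (1 - eB), ?_⟩
      have hy1 : g (algebraMap B Bs (algebraMap A B a * eB + x * (1 - eB)))
          = algebraMap A As a := by
        rw [map_add, map_mul, map_mul, map_sub, map_one, heB,
          ← IsScalarTower.algebraMap_apply A B Bs,
          IsScalarTower.algebraMap_apply A As Bs]
        rw [map_add, map_mul, map_mul, map_sub, map_one, hge, AlgHom.commutes,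
          Algebra.algebraMap_self, RingHom.id_apply, mul_one, sub_self, mul_zero, add_zero]
      have hfy : fA (algebraMap A B a * eB + x * (1 - eB)) = a := by
        apply hinjA
        rw [hfAapply, ← hfinal, hy1]
      have hqy : Ideal.Quotient.mkₐ A I (algebraMap A B a * eB + x * (1 - eB))
          = Ideal.Quotient.mk I x := by
        rw [Ideal.Quotient.mkₐ_eq_mk, Ideal.Quotient.eq]
        have : algebraMap A B a * eB + x * (1 - eB) - x = (algebraMap A B a - x) * eB := by
          ring
        rw [this]
        exact Ideal.mem_span_singleton.mpr (Dvd.intro_left _ rfl)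
      rw [hψ, AlgHom.prod_apply, hfy, hqy]
    refine ⟨B ⧸ I, inferInstance, inferInstance,
      AlgEquiv.ofBijective ψ ⟨hψinj, hψsurj⟩, ?_⟩
    intro x
    have : ((AlgEquiv.ofBijective ψ ⟨hψinj, hψsurj⟩) x).1 = fA x := rfl
    rw [this, hfAapply, hfinal]
end

section
/- Let $\Lambda$ be a complete local Noetherian ring with maximal ideal $\mathfrak{m}$ and residue field $\mathbb{F}$, and let $D \cong \prod_{i \in \mathbb{N}} \Lambda$ as a $\Lambda$-module. Let $(e_i)_{i \in I}$ be a family of elements of $D$ whose images in $D/\mathfrak{m}D$ form an $\mathbb{F}$-basis. Then for every $n \in \mathbb{N}$, the natural map $\bigoplus_{i \in I} (\Lambda/\mathfrak{m}^n) e_i \to D/\mathfrak{m}^n D$ is an isomorphism of $\Lambda$-modules. -/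
open IsLocalRing

/-- For a finitely generated ideal `J`, an element of `ℕ → Λ` all of whose coordinates
lie in `J` belongs to `J • ⊤`. -/
lemma aux_pi_mem_smul_top {Λ : Type*} [CommRing Λ] (J : Ideal Λ) (hJ : J.FG)
    (g : ℕ → Λ) (hg : ∀ j, g j ∈ J) : g ∈ J • (⊤ : Submodule Λ (ℕ → Λ)) := by
  obtain ⟨s, hs⟩ := hJ
  have hmem : ∀ j, g j ∈ Submodule.span Λ (↑s : Set Λ) := by
    intro j; rw [Ideal.submodule_span_eq, hs]; exact hg j
  choose c _ hc using fun j => Submodule.mem_span_finset.mp (hmem j)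
  have hrepr : g = ∑ a ∈ s, a • (fun j => c j a) := by
    funext j
    simp only [Finset.sum_apply, Pi.smul_apply, smul_eq_mul]
    rw [← hc j]
    exact Finset.sum_congr rfl fun a _ => (mul_comm _ _)
  rw [hrepr]
  refine Submodule.sum_mem _ fun a ha => Submodule.smul_mem_smul ?_ trivial
  rw [← hs]; exact Submodule.subset_span ha

/-- Characterisation of `J • ⊤` in a module isomorphic to `ℕ → Λ`. -/
lemma aux_mem_smul_top_iff {Λ : Type*} [CommRing Λ] {D : Type*} [AddCommGroup D]
    [Module Λ D] (ϕ : D ≃ₗ[Λ] (ℕ → Λ)) (J : Ideal Λ) (hJ : J.FG) (d : D) :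
    d ∈ J • (⊤ : Submodule Λ D) ↔ ∀ j, ϕ d j ∈ J := by
  constructor
  · intro hd
    refine Submodule.smul_induction_on hd ?_ ?_
    · intro r hr m _ j
      rw [map_smul]
      exact Ideal.mul_mem_right _ _ hr
    · intro x y hx hy j
      rw [map_add]
      exact add_mem (hx j) (hy j)
  · intro h
    have h1 : ϕ d ∈ J • (⊤ : Submodule Λ (ℕ → Λ)) := aux_pi_mem_smul_top J hJ _ h
    have h2 : Submodule.map (ϕ.symm : (ℕ → Λ) →ₗ[Λ] D) (J • (⊤ : Submodule Λ (ℕ → Λ)))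
        = J • (⊤ : Submodule Λ D) := by
      rw [Submodule.map_smul'', Submodule.map_top, LinearEquiv.range]
    have := Submodule.mem_map_of_mem (f := (ϕ.symm : (ℕ → Λ) →ₗ[Λ] D)) h1
    rw [h2] at this
    simpa using this

set_option maxHeartbeats 1000000 in
set_option synthInstance.maxHeartbeats 400000 in
/-- Key independence lemma: if the rows `a i` are independent modulo `𝔪` and
`f` has coefficients in `𝔪 ^ n` with `∑ᵢ fᵢ aᵢ ≡ 0 mod 𝔪 ^ (n+1)` coordinatewise,
then all coefficients lie in `𝔪 ^ (n+1)`. -/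
lemma aux_key {Λ : Type*} [CommRing Λ] [IsLocalRing Λ] {I : Type*} (a : I → ℕ → Λ)
    (hindep : ∀ c : I →₀ Λ,
      (∀ j, (c.sum fun i ci => ci * a i j) ∈ maximalIdeal Λ) → ∀ i, c i ∈ maximalIdeal Λ)
    (n : ℕ) (f : I →₀ Λ) (hfn : ∀ i, f i ∈ (maximalIdeal Λ) ^ n)
    (hrel : ∀ j, (f.sum fun i fi => fi * a i j) ∈ (maximalIdeal Λ) ^ (n + 1)) :
    ∀ i, f i ∈ (maximalIdeal Λ) ^ (n + 1) := by
  classical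
  set 𝔪 := maximalIdeal Λ with h𝔪
  set N : Submodule Λ Λ := ((𝔪 ^ (n + 1) : Ideal Λ) : Submodule Λ Λ) with hN
  set W : Submodule Λ (Λ ⧸ N) := Submodule.map N.mkQ ((𝔪 ^ n : Ideal Λ) : Submodule Λ Λ)
    with hW
  -- W is killed by 𝔪
  have htor : Module.IsTorsionBySet Λ W (𝔪 : Set Λ) := by
    rintro ⟨x, hx⟩ ⟨m, hm⟩
    obtain ⟨y, hy, rfl⟩ := hx
    have : m • y ∈ N := by
      have : m * y ∈ 𝔪 ^ (n + 1) := by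
        rw [pow_succ, mul_comm (𝔪 ^ n) 𝔪]
        exact Ideal.mul_mem_mul hm hy
      simpa [smul_eq_mul] using this
    apply Subtype.ext
    have : m • (N.mkQ y) = 0 := by
      rw [← map_smul, Submodule.mkQ_apply, Submodule.Quotient.mk_eq_zero]
      exact this
    simpa using this
  letI : Module (Λ ⧸ (𝔪 : Ideal Λ)) W := htor.module
  letI : Field (Λ ⧸ (𝔪 : Ideal Λ)) := Ideal.Quotient.field _
  letI : Module.Free (Λ ⧸ (𝔪 : Ideal Λ)) W := Module.Free.of_divisionRing _ _
  letI : Module.Projective (Λ ⧸ (𝔪 : Ideal Λ)) W := Module.Projective.of_free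
  -- the images of the coefficients in W
  have hwmem : ∀ i, N.mkQ (f i) ∈ W := fun i => Submodule.mem_map_of_mem (hfn i)
  set w : I → W := fun i => ⟨N.mkQ (f i), hwmem i⟩ with hw
  intro i0
  by_contra hcon
  have hwne : w i0 ≠ 0 := by
    intro h0
    apply hcon
    have : N.mkQ (f i0) = 0 := congrArg Subtype.val h0
    rw [Submodule.mkQ_apply, Submodule.Quotient.mk_eq_zero] at this
    exact this
  obtain ⟨μ, hμ⟩ : ∃ μ : Module.Dual (Λ ⧸ (𝔪 : Ideal Λ)) W, μ (w i0) ≠ 0 := by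
    by_contra h
    push_neg at h
    exact hwne ((Module.forall_dual_apply_eq_zero_iff (Λ ⧸ (𝔪 : Ideal Λ)) (w i0)).mp h)
  -- choose lifts of μ (w i)
  have hlift : ∀ i, ∃ cᵢ : Λ, Ideal.Quotient.mk 𝔪 cᵢ = μ (w i) :=
    fun i => Ideal.Quotient.mk_surjective _
  choose cf hcf using hlift
  set g : I → Λ := fun i => if f i = 0 then 0 else cf i with hg
  have hgsupp : ∀ i, g i ≠ 0 → i ∈ f.support := by
    intro i hi
    rw [Finsupp.mem_support_iff]
    intro h0
    apply hi
    simp [hg, h0]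
  set c : I →₀ Λ := Finsupp.onFinset f.support g hgsupp with hc
  have hcval : ∀ i, Ideal.Quotient.mk 𝔪 (c i) = μ (w i) := by
    intro i
    by_cases h0 : f i = 0
    · have hwi : w i = 0 := by
        apply Subtype.ext
        simp [hw, h0]
      simp [hc, hg, h0, hwi]
    · simp [hc, hg, h0, hcf i]
  -- the coefficients c satisfy the mod-𝔪 relation
  have hrel' : ∀ j, (c.sum fun i ci => ci * a i j) ∈ 𝔪 := by
    intro j
    have hsum : (c.sum fun i ci => ci * a i j) = ∑ i ∈ f.support, c i * a i j := by
      refine Finsupp.sum_of_support_subset c ?_ _ fun i _ => by simp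
      exact Finsupp.support_onFinset_subset
    rw [← Ideal.Quotient.eq_zero_iff_mem, hsum, map_sum]
    have hWzero : (∑ i ∈ f.support, (Ideal.Quotient.mk 𝔪 (a i j)) • w i) = 0 := by
      apply Subtype.ext
      have hcoe : ((∑ i ∈ f.support, (Ideal.Quotient.mk 𝔪 (a i j)) • w i : W) : Λ ⧸ N)
          = ∑ i ∈ f.support, a i j • N.mkQ (f i) := by
        rw [Submodule.coe_sum]
        refine Finset.sum_congr rfl fun i _ => ?_
        have : (Ideal.Quotient.mk 𝔪 (a i j)) • w i = a i j • w i :=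
          Module.IsTorsionBySet.mk_smul htor (a i j) (w i)
        rw [this]
        rfl
      rw [hcoe]
      have : (∑ i ∈ f.support, a i j • N.mkQ (f i)) = N.mkQ (∑ i ∈ f.support, a i j * f i) := by
        rw [map_sum]
        exact Finset.sum_congr rfl fun i _ => by rw [← map_smul]; rfl
      rw [this]
      have hmem : (∑ i ∈ f.support, a i j * f i) ∈ N := by
        have : (∑ i ∈ f.support, a i j * f i) = f.sum fun i fi => fi * a i j := by
          rw [Finsupp.sum]
          exact Finset.sum_congr rfl fun i _ => mul_comm _ _
        rw [this]
        exact hrel j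
      simp only [ZeroMemClass.coe_zero]
      rw [Submodule.mkQ_apply, Submodule.Quotient.mk_eq_zero]
      exact hmem
    have := congrArg μ hWzero
    rw [map_sum, map_zero] at this
    calc (∑ i ∈ f.support, Ideal.Quotient.mk 𝔪 (c i * a i j))
        = ∑ i ∈ f.support, (Ideal.Quotient.mk 𝔪 (a i j)) • μ (w i) := by
          refine Finset.sum_congr rfl fun i _ => ?_
          rw [map_mul, hcval i, smul_eq_mul, mul_comm]
      _ = ∑ i ∈ f.support, μ ((Ideal.Quotient.mk 𝔪 (a i j)) • w i) := by
          refine Finset.sum_congr rfl fun i _ => (map_smul μ _ _).symm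
      _ = 0 := this
  have hczero : ∀ i, c i ∈ 𝔪 := hindep c hrel'
  have : μ (w i0) = 0 := by
    rw [← hcval i0, Ideal.Quotient.eq_zero_iff_mem]
    exact hczero i0
  exact hμ this

/-- Let `Λ` be a complete local Noetherian ring with maximal ideal `𝔪` and residue
field `𝔽`, and let `D ≅ ∏_{i ∈ ℕ} Λ` as a `Λ`-module.  Let `(e i)` be a family of
elements of `D` whose images in `D/𝔪D` form an `𝔽`-basis (expressed: the map
`⊕ᵢ Λ eᵢ → D/𝔪D` is surjective with kernel exactly the tuples of coefficients in
`𝔪`).  Then for every `n` the natural map `⊕ᵢ (Λ/𝔪ⁿ) eᵢ → D/𝔪ⁿD` is an isomorphism,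
i.e. the map `(I →₀ Λ) → D/𝔪ⁿD` is surjective with kernel exactly the tuples of
coefficients in `𝔪ⁿ`. -/
theorem stmt6 (Λ : Type*) [CommRing Λ] [IsLocalRing Λ] [IsNoetherianRing Λ]
    [IsAdicComplete (maximalIdeal Λ) Λ]
    (D : Type*) [AddCommGroup D] [Module Λ D]
    (hD : Nonempty (D ≃ₗ[Λ] (ℕ → Λ)))
    (I : Type*) (e : I → D)
    (hsurj₁ : Function.Surjective
      ((Submodule.mkQ ((maximalIdeal Λ) • (⊤ : Submodule Λ D))).comp
        (Finsupp.linearCombination Λ e)))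
    (hker₁ : ∀ f : I →₀ Λ,
      (Submodule.mkQ ((maximalIdeal Λ) • (⊤ : Submodule Λ D)))
          (Finsupp.linearCombination Λ e f) = 0 ↔ ∀ i, f i ∈ maximalIdeal Λ) :
    ∀ n : ℕ,
      Function.Surjective
        ((Submodule.mkQ (((maximalIdeal Λ) ^ n) • (⊤ : Submodule Λ D))).comp
          (Finsupp.linearCombination Λ e)) ∧
      ∀ f : I →₀ Λ,
        (Submodule.mkQ (((maximalIdeal Λ) ^ n) • (⊤ : Submodule Λ D)))
            (Finsupp.linearCombination Λ e f) = 0 ↔ ∀ i, f i ∈ (maximalIdeal Λ) ^ n := by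
  classical
  obtain ⟨ϕ⟩ := hD
  set 𝔪 := maximalIdeal Λ with h𝔪
  have hFG : ∀ k : ℕ, (𝔪 ^ k).FG := fun k => (IsNoetherian.noetherian _)
  have hpi : ∀ (k : ℕ) (d : D), d ∈ (𝔪 ^ k) • (⊤ : Submodule Λ D) ↔ ∀ j, ϕ d j ∈ 𝔪 ^ k :=
    fun k d => aux_mem_smul_top_iff ϕ _ (hFG k) d
  have hpi1 : ∀ d : D, d ∈ 𝔪 • (⊤ : Submodule Λ D) ↔ ∀ j, ϕ d j ∈ 𝔪 := by
    intro d
    have := hpi 1 d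
    simpa [pow_one] using this
  -- coordinates of linear combinations
  have hcoord : ∀ (f : I →₀ Λ) (j : ℕ),
      ϕ (Finsupp.linearCombination Λ e f) j = f.sum fun i fi => fi * ϕ (e i) j := by
    intro f j
    rw [Finsupp.linearCombination_apply, Finsupp.sum, Finsupp.sum, map_sum, Finset.sum_apply]
    exact Finset.sum_congr rfl fun i _ => by simp
  -- independence hypothesis in the form needed for aux_key
  have hindep : ∀ c : I →₀ Λ,
      (∀ j, (c.sum fun i ci => ci * ϕ (e i) j) ∈ 𝔪) → ∀ i, c i ∈ 𝔪 := by
    intro c hc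
    apply (hker₁ c).mp
    rw [Submodule.mkQ_apply, Submodule.Quotient.mk_eq_zero, hpi1]
    intro j
    rw [hcoord]
    exact hc j
  intro n
  induction n with
  | zero =>
    have htop : (𝔪 ^ 0) • (⊤ : Submodule Λ D) = ⊤ := by
      rw [pow_zero, Ideal.one_eq_top, Submodule.top_smul]
    constructor
    · intro y
      obtain ⟨d, rfl⟩ := Submodule.mkQ_surjective _ y
      refine ⟨0, ?_⟩
      rw [LinearMap.comp_apply, Submodule.mkQ_apply, Submodule.mkQ_apply,
        Submodule.Quotient.eq]
      rw [htop]
      trivial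
    · intro f
      constructor
      · intro _ i
        rw [pow_zero, Ideal.one_eq_top]
        trivial
      · intro _
        rw [Submodule.mkQ_apply, Submodule.Quotient.mk_eq_zero, htop]
        trivial
  | succ n ih =>
    obtain ⟨ihs, ihk⟩ := ih
    have hstep : (𝔪 ^ (n + 1)) • (⊤ : Submodule Λ D) = (𝔪 ^ n) • (𝔪 • (⊤ : Submodule Λ D)) := by
      rw [← Submodule.smul_assoc, Ideal.smul_eq_mul, ← pow_succ]
    constructor
    · -- surjectivity
      intro y
      obtain ⟨d, rfl⟩ := Submodule.mkQ_surjective _ y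
      obtain ⟨f, hf⟩ := ihs (Submodule.mkQ _ d)
      rw [LinearMap.comp_apply, Submodule.mkQ_apply, Submodule.mkQ_apply,
        Submodule.Quotient.eq] at hf
      have hz : d - Finsupp.linearCombination Λ e f ∈ (𝔪 ^ n) • (⊤ : Submodule Λ D) := by
        have := Submodule.neg_mem _ hf
        simpa using this
      -- every element of 𝔪^n • ⊤ is a combination modulo 𝔪^(n+1) • ⊤
      have hlift : ∀ z ∈ (𝔪 ^ n) • (⊤ : Submodule Λ D),
          ∃ g : I →₀ Λ, z - Finsupp.linearCombination Λ e g
            ∈ (𝔪 ^ (n + 1)) • (⊤ : Submodule Λ D) := by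
        intro z hzmem
        refine Submodule.smul_induction_on hzmem ?_ ?_
        · intro r hr m _
          obtain ⟨h, hh⟩ := hsurj₁ (Submodule.mkQ _ m)
          rw [LinearMap.comp_apply, Submodule.mkQ_apply, Submodule.mkQ_apply,
            Submodule.Quotient.eq] at hh
          refine ⟨r • h, ?_⟩
          rw [map_smul]
          have : r • m - r • (Finsupp.linearCombination Λ e h)
              = -(r • ((Finsupp.linearCombination Λ e h) - m)) := by rw [smul_sub, neg_sub]
          rw [this, hstep]
          exact Submodule.neg_mem _ (Submodule.smul_mem_smul hr hh)
        · rintro x y ⟨gx, hgx⟩ ⟨gy, hgy⟩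
          refine ⟨gx + gy, ?_⟩
          rw [map_add]
          have : x + y - (Finsupp.linearCombination Λ e gx + Finsupp.linearCombination Λ e gy)
              = (x - Finsupp.linearCombination Λ e gx) + (y - Finsupp.linearCombination Λ e gy) := by
            abel
          rw [this]
          exact Submodule.add_mem _ hgx hgy
      obtain ⟨g, hg⟩ := hlift _ hz
      refine ⟨f + g, ?_⟩
      rw [LinearMap.comp_apply, Submodule.mkQ_apply, Submodule.mkQ_apply,
        Submodule.Quotient.eq, map_add]
      have : Finsupp.linearCombination Λ e f + Finsupp.linearCombination Λ e g - d
          = -((d - Finsupp.linearCombination Λ e f) - Finsupp.linearCombination Λ e g) := by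
        abel
      rw [this]
      exact Submodule.neg_mem _ hg
    · -- kernel
      intro f
      rw [Submodule.mkQ_apply, Submodule.Quotient.mk_eq_zero]
      constructor
      · intro hmem
        have hmemn : Finsupp.linearCombination Λ e f ∈ (𝔪 ^ n) • (⊤ : Submodule Λ D) :=
          Submodule.smul_mono_left (Ideal.pow_le_pow_right (Nat.le_succ n)) hmem
        have hfn : ∀ i, f i ∈ 𝔪 ^ n := by
          apply (ihk f).mp
          rw [Submodule.mkQ_apply, Submodule.Quotient.mk_eq_zero]
          exact hmemn
        refine aux_key (fun i j => ϕ (e i) j) hindep n f hfn ?_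
        intro j
        rw [← hcoord]
        exact (hpi (n + 1) _).mp hmem j
      · intro hf
        rw [Finsupp.linearCombination_apply, Finsupp.sum]
        refine Submodule.sum_mem _ fun i _ => Submodule.smul_mem_smul (hf i) trivial
end

section
/- With $\Lambda$, $\mathfrak{m}$, $D \cong \prod_{i \in \mathbb{N}} \Lambda$ and $(e_i)_{i \in I}$ as above (images forming a basis of $D/\mathfrak{m}D$), every element $x \in D$ admits a unique expression $x = \sum_{i \in I} a_i e_i$ with $a_i \in \Lambda$ such that for every $h \in \mathbb{N}$ the set $\{i \in I : a_i \notin \mathfrak{m}^h\}$ is finite (i.e., $a_i \to 0$ in the $\mathfrak{m}$-adic topology along the filter of cofinite subsets of $I$). -/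
open IsLocalRing

set_option linter.unusedSectionVars false
set_option maxHeartbeats 1000000

section Aux2
variable {Λ : Type*} [CommRing Λ] [IsLocalRing Λ] [IsNoetherianRing Λ]
variable {D : Type*} [AddCommGroup D] [Module Λ D]
variable {I : Type*} [DecidableEq I]

lemma mem_smul_top_of_coord' (ι : D ≃ₗ[Λ] (ℕ → Λ)) {J : Ideal Λ} (hJ : J.FG) {d : D}
    (hd : ∀ c, ι d c ∈ J) : d ∈ J • (⊤ : Submodule Λ D) := by
  obtain ⟨T, hT⟩ := hJ
  have hmem : ∀ c, ∃ f : Λ → Λ, ∑ m ∈ T, f m • m = ι d c := by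
    intro c; have := hd c; rw [← hT] at this; exact (Submodule.mem_span_finset.1 this).imp fun _ h => h.2
  choose f hf using hmem
  have hd' : d = ∑ m ∈ T, m • (ι.symm fun c => f c m) := by
    apply ι.injective
    rw [map_sum]; funext c; rw [Finset.sum_apply, ← hf c]
    simp [smul_eq_mul, mul_comm]
  rw [hd']
  refine Submodule.sum_mem _ fun m hm => Submodule.smul_mem_smul ?_ trivial
  rw [← hT]; exact Ideal.subset_span hm

lemma exists_functionals (ι : D ≃ₗ[Λ] (ℕ → Λ)) (e : I → D)
    (hker : ∀ f : I →₀ Λ,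
      Finsupp.linearCombination Λ e f ∈ (maximalIdeal Λ) • (⊤ : Submodule Λ D) →
        ∀ i, f i ∈ maximalIdeal Λ)
    (s : Finset I) :
    ∃ Φ : I → (D →ₗ[Λ] Λ),
      (∀ i (J : Ideal Λ) (d : D), (∀ c, ι d c ∈ J) → Φ i d ∈ J) ∧
      (∀ i ∈ s, ∀ j ∈ s, Φ i (e j) - (if i = j then 1 else 0) ∈ maximalIdeal Λ) := by
  classical
  set k := ResidueField Λ
  -- lifts
  have hσ : ∀ x : k, ∃ y : Λ, residue Λ y = x ∧ (x = 0 → y = 0) := by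
    intro x
    by_cases hx : x = 0
    · exact ⟨0, by simp [hx], fun _ => rfl⟩
    · obtain ⟨y, hy⟩ := residue_surjective x
      exact ⟨y, hy, fun h => absurd h hx⟩
  choose σ hσ1 hσ2 using hσ
  have hres0 : ∀ a : Λ, a ∈ maximalIdeal Λ ↔ residue Λ a = 0 := by
    intro a; exact (Ideal.Quotient.eq_zero_iff_mem).symm
  -- reduction of basis vectors
  set w : I → (ℕ → k) := fun i c => residue Λ (ι (e i) c) with hw
  set v : ↥s → (ℕ → k) := fun j => w j with hv
  -- linear independence over residue field
  have li : LinearIndependent k v := by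
    rw [Fintype.linearIndependent_iff]
    intro g hg
    set f : I →₀ Λ := Finsupp.onFinset s (fun i => if h : i ∈ s then σ (g ⟨i, h⟩) else 0)
      (by intro i hi; by_contra h; exact hi (dif_neg h)) with hfdef
    have hfmem : ∀ i (hi : i ∈ s), f i = σ (g ⟨i, hi⟩) := by
      intro i hi; simp [hfdef, Finsupp.onFinset_apply, dif_pos hi]
    have hlc : Finsupp.linearCombination Λ e f ∈ (maximalIdeal Λ) • (⊤ : Submodule Λ D) := by
      apply mem_smul_top_of_coord' ι (IsNoetherian.noetherian _)
      intro c
      rw [hres0]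
      have hlcf : Finsupp.linearCombination Λ e f = ∑ i ∈ s, f i • e i := by
        rw [Finsupp.linearCombination_apply]
        exact Finsupp.onFinset_sum _ (fun a => by simp)
      rw [hlcf, map_sum, Finset.sum_apply, map_sum]
      have key : ∑ i ∈ s, residue Λ ((ι (f i • e i)) c) = ∑ j ∈ s.attach, (g j • v j) c := by
        rw [← Finset.sum_attach s (fun i => residue Λ ((ι (f i • e i)) c))]
        refine Finset.sum_congr rfl fun j _ => ?_
        rw [map_smul]
        simp only [Pi.smul_apply, smul_eq_mul, map_mul]
        rw [hfmem (↑j) j.2, hσ1]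
      rw [key]
      have := congrFun hg c
      simpa [Finset.univ_eq_attach] using this
    intro j
    have hj := hker f hlc j
    rw [hfmem j j.2] at hj
    have : residue Λ (σ (g j)) = 0 := (hres0 _).1 hj
    rwa [hσ1] at this
  -- the span
  set W := Submodule.span k (Set.range v) with hW
  haveI : Module.Finite k W := Module.Finite.span_of_finite k (Set.finite_range v)
  haveI : IsArtinian k W := inferInstance
  -- minimal coordinate kernel
  set L : Finset ℕ → Submodule k W :=
    fun t => ⨅ c ∈ t, LinearMap.ker ((LinearMap.proj c : (ℕ → k) →ₗ[k] k).comp W.subtype)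
    with hL
  obtain ⟨W₀, ⟨t₀, ht₀⟩, hmin⟩ := IsArtinian.set_has_minimal (Set.range L) ⟨L ∅, ⟨∅, rfl⟩⟩
  have hL0 : L t₀ = ⊥ := by
    rw [eq_bot_iff]
    intro u hu
    have hzero : ∀ c : ℕ, (u : ℕ → k) c = 0 := by
      intro c
      have hle : L (insert c t₀) ≤ L t₀ := by
        refine le_iInf₂ fun c' hc' => iInf₂_le c' (Finset.mem_insert_of_mem hc')
      have heq : L (insert c t₀) = L t₀ := by
        by_contra hne
        exact hmin (L (insert c t₀)) ⟨_, rfl⟩ (ht₀ ▸ lt_of_le_of_ne hle (by rw [ht₀] at hne ⊢; exact hne))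
      have : u ∈ L (insert c t₀) := by rw [heq]; exact hu
      rw [hL] at this
      simp only [Submodule.mem_iInf, LinearMap.mem_ker] at this
      have := this c (Finset.mem_insert_self c t₀)
      simpa using this
    have : (u : ℕ → k) = 0 := funext hzero
    simpa [Submodule.mem_bot] using Subtype.ext this
  -- restriction to t₀ coordinates is injective on W
  set ρW : W →ₗ[k] (↥t₀ → k) :=
    (LinearMap.pi fun c : ↥t₀ => (LinearMap.proj (c : ℕ) : (ℕ → k) →ₗ[k] k)).comp W.subtype
    with hρ
  have hρinj : LinearMap.ker ρW = ⊥ := by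
    rw [eq_bot_iff]
    intro u hu
    rw [LinearMap.mem_ker] at hu
    have : u ∈ L t₀ := by
      rw [hL]
      simp only [Submodule.mem_iInf, LinearMap.mem_ker]
      intro c hc
      have := congrFun hu ⟨c, hc⟩
      exact this
    rw [hL0] at this
    exact this
  obtain ⟨G, hG⟩ := LinearMap.exists_leftInverse_of_injective ρW hρinj
  -- dual functionals
  set ψ : ↥s → (W →ₗ[k] k) := fun i => (Finsupp.lapply i).comp li.repr with hψ
  set φ : ↥s → ((↥t₀ → k) →ₗ[k] k) := fun i => (ψ i).comp G with hφdef
  have hvW : ∀ j : ↥s, v j ∈ W := fun j => Submodule.subset_span ⟨j, rfl⟩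
  have hφ : ∀ i j : ↥s, φ i (ρW ⟨v j, hvW j⟩) = if i = j then 1 else 0 := by
    intro i j
    have h1 : G (ρW ⟨v j, hvW j⟩) = ⟨v j, hvW j⟩ := by
      have := LinearMap.congr_fun hG ⟨v j, hvW j⟩
      simpa using this
    simp only [hφdef, LinearMap.comp_apply, h1, hψ]
    rw [li.repr_eq_single j ⟨v j, hvW j⟩ rfl]
    simp [Finsupp.single_apply, eq_comm]
  -- coefficients lifted to Λ
  set A : ↥s → ↥t₀ → Λ := fun i c => σ (φ i (fun c' => if c = c' then 1 else 0)) with hA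
  set Φ₀ : ↥s → (D →ₗ[Λ] Λ) := fun i =>
    ∑ c : ↥t₀, A i c • ((LinearMap.proj (c : ℕ) : (ℕ → Λ) →ₗ[Λ] Λ).comp ι.toLinearMap) with hΦ₀
  have hΦ₀apply : ∀ i d, Φ₀ i d = ∑ c : ↥t₀, A i c * ι d (c : ℕ) := by
    intro i d
    simp only [hΦ₀, LinearMap.sum_apply, LinearMap.smul_apply, LinearMap.comp_apply,
      LinearMap.proj_apply, smul_eq_mul, LinearEquiv.coe_coe]
  refine ⟨fun i => if h : i ∈ s then Φ₀ ⟨i, h⟩ else 0, ?_, ?_⟩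
  · intro i J d hd
    beta_reduce
    by_cases h : i ∈ s
    · rw [dif_pos h, hΦ₀apply]
      exact Submodule.sum_mem _ fun c _ => J.mul_mem_left _ (hd c)
    · rw [dif_neg h]
      exact J.zero_mem
  · intro i hi j hj
    beta_reduce
    rw [dif_pos hi, hres0, map_sub]
    have h1 : residue Λ (Φ₀ ⟨i, hi⟩ (e j)) = φ ⟨i, hi⟩ (ρW ⟨v ⟨j, hj⟩, hvW _⟩) := by
      rw [hΦ₀apply, map_sum]
      have hterm : ∀ c : ↥t₀, residue Λ (A ⟨i, hi⟩ c * ι (e j) (c : ℕ))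
          = (ρW ⟨v ⟨j, hj⟩, hvW _⟩) c • (φ ⟨i, hi⟩ (fun c' => if c = c' then 1 else 0)) := by
        intro c
        rw [map_mul]
        simp only [hA]
        rw [hσ1, mul_comm]
        rfl
      rw [Finset.sum_congr rfl (fun c _ => hterm c)]
      exact (LinearMap.pi_apply_eq_sum_univ (φ ⟨i, hi⟩) _).symm
    rw [h1, hφ]
    have h2 : residue Λ (if i = j then (1 : Λ) else 0)
        = if (⟨i, hi⟩ : ↥s) = ⟨j, hj⟩ then (1 : k) else 0 := by
      by_cases hij : i = j <;> simp [hij, Subtype.ext_iff]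
    rw [h2, sub_self]



lemma coeff_mem (ι : D ≃ₗ[Λ] (ℕ → Λ)) (e : I → D)
    (hker : ∀ f : I →₀ Λ,
      Finsupp.linearCombination Λ e f ∈ (maximalIdeal Λ) • (⊤ : Submodule Λ D) →
        ∀ i, f i ∈ maximalIdeal Λ)
    (f : I →₀ Λ) (n : ℕ)
    (hf : Finsupp.linearCombination Λ e f ∈ ((maximalIdeal Λ) ^ n) • (⊤ : Submodule Λ D)) :
    ∀ i, f i ∈ (maximalIdeal Λ) ^ n := by
  classical
  intro i₀
  by_cases hi₀ : i₀ ∈ f.support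
  swap
  · rw [Finsupp.notMem_support_iff.1 hi₀]; exact zero_mem _
  set s := f.support with hs
  obtain ⟨Φ, hΦ1, hΦ2⟩ := exists_functionals ι e hker s
  have hcoord : ∀ c, (ι (Finsupp.linearCombination Λ e f)) c ∈ (maximalIdeal Λ) ^ n := by
    intro c
    refine Submodule.smul_induction_on
      (p := fun d => ∀ c, ι d c ∈ (maximalIdeal Λ) ^ n) hf ?_ ?_ c
    · intro r hr m _ c
      rw [map_smul]
      simpa [smul_eq_mul] using Ideal.mul_mem_right _ _ hr
    · intro y z hy hz c
      rw [map_add]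
      exact add_mem (hy c) (hz c)
  have hval : ∀ i, Φ i (Finsupp.linearCombination Λ e f) ∈ (maximalIdeal Λ) ^ n :=
    fun i => hΦ1 i _ _ hcoord
  have hexp : ∀ i, Φ i (Finsupp.linearCombination Λ e f) = ∑ j ∈ s, f j * Φ i (e j) := by
    intro i
    rw [Finsupp.linearCombination_apply, Finsupp.sum, map_sum]
    exact Finset.sum_congr rfl fun j _ => by rw [map_smul, smul_eq_mul]
  have main : ∀ t : ℕ, ∀ i ∈ s, f i ∈ (maximalIdeal Λ) ^ n + (maximalIdeal Λ) ^ t := by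
    intro t
    induction t with
    | zero =>
      intro i hi
      rw [pow_zero, Ideal.one_eq_top]
      exact Submodule.mem_sup_right trivial
    | succ t ih =>
      intro i hi
      have heq : f i = Φ i (Finsupp.linearCombination Λ e f)
          - ∑ j ∈ s, f j * (Φ i (e j) - (if i = j then 1 else 0)) := by
        rw [hexp i]
        have : ∀ j ∈ s, f j * Φ i (e j) - f j * (Φ i (e j) - (if i = j then 1 else 0))
            = if i = j then f j else 0 := by
          intro j _
          by_cases hij : i = j <;> simp [hij] <;> ring
        rw [← Finset.sum_sub_distrib, Finset.sum_congr rfl this]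
        have : ∑ j ∈ s, (if i = j then f j else 0) = f i := by
          rw [Finset.sum_ite_eq s i (fun j => f j), if_pos hi]
        rw [this]
      rw [heq]
      refine sub_mem (Submodule.mem_sup_left (hval i)) (Submodule.sum_mem _ fun j hj => ?_)
      obtain ⟨a, ha, b, hb, hab⟩ := Submodule.mem_sup.1 (ih j hj)
      rw [← hab, add_mul]
      refine add_mem (Submodule.mem_sup_left (Ideal.mul_mem_right _ _ ha))
        (Submodule.mem_sup_right ?_)
      rw [pow_succ]
      exact Ideal.mul_mem_mul hb (hΦ2 i hi j hj)
  have := main n i₀ hi₀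
  have hle : ((maximalIdeal Λ) ^ n + (maximalIdeal Λ) ^ n : Ideal Λ) ≤ (maximalIdeal Λ) ^ n := by
    rw [Submodule.add_eq_sup]
    exact sup_le le_rfl le_rfl
  exact hle this

end Aux2

/-- With `Λ` a complete local Noetherian ring with maximal ideal `𝔪`,
`D ≅ ∏_{i ∈ ℕ} Λ`, and `(e i)` a family of elements whose images form a basis of
`D/𝔪D` over the residue field, every `x ∈ D` has a unique expression `x = ∑ᵢ aᵢ eᵢ`
with `aᵢ → 0` `𝔪`-adically along the filter of cofinite subsets of `I`
(for every `h` the set `{i | aᵢ ∉ 𝔪ʰ}` is finite); the sum converges in the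
`𝔪`-adic topology: for every `n`, and every finite set `s` containing all `i`
with `aᵢ ∉ 𝔪ⁿ`, we have `x - ∑_{i ∈ s} aᵢ eᵢ ∈ 𝔪ⁿD`. -/
theorem stmt7 (Λ : Type*) [CommRing Λ] [IsLocalRing Λ] [IsNoetherianRing Λ]
    [IsAdicComplete (maximalIdeal Λ) Λ]
    (D : Type*) [AddCommGroup D] [Module Λ D]
    (hD : Nonempty (D ≃ₗ[Λ] (ℕ → Λ)))
    (I : Type*) (e : I → D)
    (hsurj₁ : Function.Surjective
      ((Submodule.mkQ ((maximalIdeal Λ) • (⊤ : Submodule Λ D))).comp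
        (Finsupp.linearCombination Λ e)))
    (hker₁ : ∀ f : I →₀ Λ,
      (Submodule.mkQ ((maximalIdeal Λ) • (⊤ : Submodule Λ D)))
          (Finsupp.linearCombination Λ e f) = 0 ↔ ∀ i, f i ∈ maximalIdeal Λ)
    (x : D) :
    ∃! a : I → Λ,
      (∀ h : ℕ, {i : I | a i ∉ (maximalIdeal Λ) ^ h}.Finite) ∧
      ∀ n : ℕ, ∀ s : Finset I, {i : I | a i ∉ (maximalIdeal Λ) ^ n} ⊆ ↑s →
        x - ∑ i ∈ s, a i • e i ∈ ((maximalIdeal Λ) ^ n) • (⊤ : Submodule Λ D) := by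
  classical
  obtain ⟨ι⟩ := hD
  set 𝔪 := maximalIdeal Λ with h𝔪
  have hidsmul : ∀ J : Ideal Λ, (J • ⊤ : Submodule Λ Λ) = J := by
    intro J; rw [smul_eq_mul, Ideal.mul_top]
  have hker : ∀ f : I →₀ Λ,
      Finsupp.linearCombination Λ e f ∈ 𝔪 • (⊤ : Submodule Λ D) → ∀ i, f i ∈ 𝔪 := by
    intro f hf
    refine (hker₁ f).1 ?_
    rwa [Submodule.mkQ_apply, Submodule.Quotient.mk_eq_zero]
  have hsurj : ∀ d : D, ∃ f : I →₀ Λ,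
      d - Finsupp.linearCombination Λ e f ∈ 𝔪 • (⊤ : Submodule Λ D) := by
    intro d
    obtain ⟨f, hf⟩ := hsurj₁ (Submodule.mkQ (𝔪 • (⊤ : Submodule Λ D)) d)
    refine ⟨f, ?_⟩
    rw [LinearMap.comp_apply, Submodule.mkQ_apply, Submodule.mkQ_apply] at hf
    exact (Submodule.Quotient.eq _).1 hf.symm
  -- one-step approximation
  have step : ∀ (n : ℕ) (y : D), ∃ f : I →₀ Λ,
      y ∈ (𝔪 ^ n) • (⊤ : Submodule Λ D) →
      (∀ i, f i ∈ 𝔪 ^ n) ∧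
        y - Finsupp.linearCombination Λ e f ∈ (𝔪 ^ (n+1)) • (⊤ : Submodule Λ D) := by
    intro n y
    by_cases hy : y ∈ (𝔪 ^ n) • (⊤ : Submodule Λ D)
    swap
    · exact ⟨0, fun h => absurd h hy⟩
    have : ∃ f : I →₀ Λ, (∀ i, f i ∈ 𝔪 ^ n) ∧
        y - Finsupp.linearCombination Λ e f ∈ (𝔪 ^ (n+1)) • (⊤ : Submodule Λ D) := by
      refine Submodule.smul_induction_on
        (p := fun y => ∃ f : I →₀ Λ, (∀ i, f i ∈ 𝔪 ^ n) ∧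
          y - Finsupp.linearCombination Λ e f ∈ (𝔪 ^ (n+1)) • (⊤ : Submodule Λ D))
        hy ?_ ?_
      · intro r hr d _
        obtain ⟨f₀, hf₀⟩ := hsurj d
        refine ⟨r • f₀, fun i => ?_, ?_⟩
        · rw [Finsupp.smul_apply, smul_eq_mul]
          exact Ideal.mul_mem_right _ _ hr
        · rw [map_smul, ← smul_sub]
          have hrw : (𝔪 ^ (n+1)) • (⊤ : Submodule Λ D) = (𝔪 ^ n) • (𝔪 • ⊤) := by
            rw [← Submodule.smul_assoc, smul_eq_mul, pow_succ]
          rw [hrw]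
          exact Submodule.smul_mem_smul hr hf₀
      · rintro y z ⟨f₁, hf₁, hy₁⟩ ⟨f₂, hf₂, hy₂⟩
        refine ⟨f₁ + f₂, fun i => ?_, ?_⟩
        · rw [Finsupp.add_apply]
          exact add_mem (hf₁ i) (hf₂ i)
        · rw [map_add]
          have : y + z - (Finsupp.linearCombination Λ e f₁ + Finsupp.linearCombination Λ e f₂)
              = (y - Finsupp.linearCombination Λ e f₁) + (z - Finsupp.linearCombination Λ e f₂) := by
            abel
          rw [this]
          exact Submodule.add_mem _ hy₁ hy₂
    obtain ⟨f, h1, h2⟩ := this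
    exact ⟨f, fun _ => ⟨h1, h2⟩⟩
  choose F hF using step
  set X : ℕ → D :=
    fun n => Nat.rec x (fun n xn => xn - Finsupp.linearCombination Λ e (F n xn)) n with hX
  set fs : ℕ → (I →₀ Λ) := fun n => F n (X n) with hfs
  have hX0 : X 0 = x := rfl
  have hXsucc : ∀ n, X (n+1) = X n - Finsupp.linearCombination Λ e (fs n) := fun n => rfl
  have hXmem : ∀ n, X n ∈ (𝔪 ^ n) • (⊤ : Submodule Λ D) := by
    intro n
    induction n with
    | zero =>
      rw [hX0, pow_zero, Ideal.one_eq_top, Submodule.top_smul]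
      trivial
    | succ n ih =>
      rw [hXsucc]
      exact (hF n (X n) ih).2
  have hfsmem : ∀ n i, fs n i ∈ 𝔪 ^ n := fun n => (hF n (X n) (hXmem n)).1
  set b : ℕ → I → Λ := fun N i => ∑ m ∈ Finset.range N, fs m i with hb
  have hXsum : ∀ N, X N = x - ∑ m ∈ Finset.range N, Finsupp.linearCombination Λ e (fs m) := by
    intro N
    induction N with
    | zero => simp [hX0]
    | succ N ih =>
      rw [hXsucc, ih, Finset.sum_range_succ]
      abel
  -- limits
  have cauchy : ∀ i, ∃ L : Λ, ∀ N, b N i ≡ L [SMOD ((𝔪 ^ N • ⊤ : Submodule Λ Λ))] := by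
    intro i
    refine IsPrecomplete.prec (IsAdicComplete.toIsPrecomplete : IsPrecomplete 𝔪 Λ) ?_
    intro m n hmn
    rw [SModEq.sub_mem, hidsmul]
    have hIco : ∑ k ∈ Finset.Ico m n, fs k i = b n i - b m i :=
      Finset.sum_Ico_eq_sub (fun k => fs k i) hmn
    have : b m i - b n i = -(∑ k ∈ Finset.Ico m n, fs k i) := by rw [hIco]; abel
    rw [this]
    refine neg_mem (Submodule.sum_mem _ fun k hk => ?_)
    exact Ideal.pow_le_pow_right (Finset.mem_Ico.1 hk).1 (hfsmem k i)
  choose a ha using cauchy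
  have hab : ∀ i N, a i - b N i ∈ 𝔪 ^ N := by
    intro i N
    have := (ha i N).symm
    rwa [SModEq.sub_mem, hidsmul] at this
  -- finiteness
  have hfin : ∀ h : ℕ, {i : I | a i ∉ 𝔪 ^ h}.Finite := by
    intro h
    refine Set.Finite.subset
      (Finset.finite_toSet ((Finset.range h).biUnion fun m => (fs m).support)) ?_
    intro i hi
    simp only [Set.mem_setOf_eq] at hi
    by_contra hc
    apply hi
    have hb0 : b h i = 0 := by
      refine Finset.sum_eq_zero fun m hm => ?_
      refine Finsupp.notMem_support_iff.1 fun hmem => hc ?_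
      exact Finset.mem_coe.2 (Finset.mem_biUnion.2 ⟨m, hm, hmem⟩)
    have := hab i h
    rwa [hb0, sub_zero] at this
  -- convergence
  have hconv : ∀ n : ℕ, ∀ s : Finset I, {i : I | a i ∉ 𝔪 ^ n} ⊆ ↑s →
      x - ∑ i ∈ s, a i • e i ∈ (𝔪 ^ n) • (⊤ : Submodule Λ D) := by
    intro n s hs
    set T := s ∪ (Finset.range n).biUnion (fun m => (fs m).support) with hT
    have hsT : s ⊆ T := Finset.subset_union_left
    have h2 : ∑ m ∈ Finset.range n, Finsupp.linearCombination Λ e (fs m)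
        = ∑ i ∈ T, b n i • e i := by
      have hterm : ∀ m ∈ Finset.range n,
          Finsupp.linearCombination Λ e (fs m) = ∑ i ∈ T, fs m i • e i := by
        intro m hm
        rw [Finsupp.linearCombination_apply, Finsupp.sum]
        refine Finset.sum_subset ?_ ?_
        · intro i hi
          exact Finset.mem_union_right _ (Finset.mem_biUnion.2 ⟨m, hm, hi⟩)
        · intro i _ hi
          rw [Finsupp.notMem_support_iff.1 hi, zero_smul]
      rw [Finset.sum_congr rfl hterm, Finset.sum_comm]
      refine Finset.sum_congr rfl fun i _ => ?_
      rw [hb, ← Finset.sum_smul]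
    have h3 : ∑ i ∈ s, a i • e i = ∑ i ∈ T, (if i ∈ s then a i else 0) • e i := by
      symm
      calc ∑ i ∈ T, (if i ∈ s then a i else 0) • e i
          = ∑ i ∈ T, (if i ∈ s then a i • e i else 0) := by
            refine Finset.sum_congr rfl fun i _ => ?_
            by_cases h : i ∈ s <;> simp [h]
        _ = ∑ i ∈ T ∩ s, a i • e i := Finset.sum_ite_mem _ _ _
        _ = ∑ i ∈ s, a i • e i := by rw [Finset.inter_eq_right.2 hsT]
    have split : x - ∑ i ∈ s, a i • e i
        = X n + ∑ i ∈ T, (b n i - (if i ∈ s then a i else 0)) • e i := by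
      rw [hXsum n, h3]
      have hdist : ∑ i ∈ T, (b n i - (if i ∈ s then a i else 0)) • e i
          = ∑ i ∈ T, b n i • e i - ∑ i ∈ T, (if i ∈ s then a i else 0) • e i := by
        rw [← Finset.sum_sub_distrib]
        exact Finset.sum_congr rfl fun i _ => sub_smul _ _ _
      rw [hdist, ← h2]
      abel
    rw [split]
    refine Submodule.add_mem _ (hXmem n)
      (Submodule.sum_mem _ fun i _ => Submodule.smul_mem_smul ?_ trivial)
    by_cases h : i ∈ s
    · rw [if_pos h]
      have : b n i - a i = -(a i - b n i) := by ring
      rw [this]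
      exact neg_mem (hab i n)
    · rw [if_neg h, sub_zero]
      have hai : a i ∈ 𝔪 ^ n := by
        by_contra hc
        exact h (hs hc)
      have : b n i = a i - (a i - b n i) := by ring
      rw [this]
      exact sub_mem hai (hab i n)
  refine ⟨a, ⟨hfin, hconv⟩, ?_⟩
  -- uniqueness
  rintro a' ⟨hfin', hconv'⟩
  funext i₀
  have key : ∀ n, a' i₀ - a i₀ ∈ 𝔪 ^ n := by
    intro n
    set t : Finset I := ((hfin n).toFinset ∪ (hfin' n).toFinset) ∪ {i₀} with ht
    have hsub : {i : I | a i ∉ 𝔪 ^ n} ⊆ ↑t := by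
      intro i hi
      simp only [ht, Finset.coe_union, Set.mem_union]
      left; left
      rwa [Set.Finite.coe_toFinset]
    have hsub' : {i : I | a' i ∉ 𝔪 ^ n} ⊆ ↑t := by
      intro i hi
      simp only [ht, Finset.coe_union, Set.mem_union]
      left; right
      rwa [Set.Finite.coe_toFinset]
    have hi₀t : i₀ ∈ t := by simp [ht]
    have h1 := hconv n t hsub
    have h2 := hconv' n t hsub'
    have hdiff : ∑ i ∈ t, (a i - a' i) • e i ∈ (𝔪 ^ n) • (⊤ : Submodule Λ D) := by
      have heq : ∑ i ∈ t, (a i - a' i) • e i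
          = (x - ∑ i ∈ t, a' i • e i) - (x - ∑ i ∈ t, a i • e i) := by
        rw [sub_sub_sub_cancel_left, ← Finset.sum_sub_distrib]
        exact Finset.sum_congr rfl fun i _ => (sub_smul _ _ _)
      rw [heq]
      exact sub_mem h2 h1
    set f : I →₀ Λ := ∑ i ∈ t, Finsupp.single i (a i - a' i) with hf
    have hlcf : Finsupp.linearCombination Λ e f = ∑ i ∈ t, (a i - a' i) • e i := by
      rw [hf, map_sum]
      exact Finset.sum_congr rfl fun i _ => Finsupp.linearCombination_single _ _ _
    have hfi₀ : f i₀ = a i₀ - a' i₀ := by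
      rw [hf, Finsupp.finset_sum_apply]
      rw [Finset.sum_congr rfl (fun i _ => Finsupp.single_apply)]
      rw [Finset.sum_ite_eq' t i₀ (fun i => a i - a' i), if_pos hi₀t]
    have hmem := coeff_mem ι e hker f n (by rw [hlcf]; exact hdiff) i₀
    rw [hfi₀] at hmem
    have : a' i₀ - a i₀ = -(a i₀ - a' i₀) := by ring
    rw [this]
    exact neg_mem hmem
  have hzero : a' i₀ - a i₀ = 0 := by
    refine IsHausdorff.haus (IsAdicComplete.toIsHausdorff : IsHausdorff 𝔪 Λ) _ fun n => ?_
    rw [SModEq.zero, hidsmul]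
    exact key n
  exact sub_eq_zero.1 hzero
end
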